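/- Let n = l²·m where l ≥ 2 and m ≥ 1 are integers, let A = C_n × C_n be the direct product of two cyclic groups of order n, and let α : A × A → ℂˣ be a 2-cocycle such that the twisted group algebra ℂ^αA is a simple ring. Then there exist subgroups L₁, L₂ ≤ A, each a Lagrangian with respect to the class of α (i.e. the restriction of the class of α to Lᵢ is trivial and |Lᵢ| = n), such that the quotient A/L₁ is cyclic of order n while A/L₂ ≅ C_l × C_{l·m} is not cyclic; in particular A/L₁ and A/L₂ are not isomorphic. -/

import Mathlib

/-- A 2-cocycle on `G` with values in `ℂˣ`. -/
def IsTwoCocycle {G : Type} [Group G] (α : G → G → ℂˣ) : Prop :=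
  ∀ g h k : G, α g h * α (g * h) k = α h k * α g (h * k)

/-- A twisted group algebra `ℂ^αG`: a ℂ-algebra with a basis `u_g` of invertible
elements satisfying `u_g * u_h = α g h • u_{gh}`. -/
structure TwistedGroupAlgebra (G : Type) [Group G] (α : G → G → ℂˣ) where
  carrier : Type
  [ringStr : Ring carrier]
  [algStr : Algebra ℂ carrier]
  u : G → carrierˣ
  basis : Module.Basis G ℂ carrier
  basis_eq : ∀ g : G, basis g = (u g : carrier)
  u_mul : ∀ g h : G, (u g : carrier) * (u h : carrier) = (α g h : ℂ) • (u (g * h) : carrier)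

attribute [instance] TwistedGroupAlgebra.ringStr TwistedGroupAlgebra.algStr

namespace TwistedGroupAlgebra

variable {G : Type} [Group G] {α : G → G → ℂˣ}

/-- The subalgebra `ℂ^αN ⊆ ℂ^αG` spanned by the `u_n`, `n ∈ N`. -/
def sub (A : TwistedGroupAlgebra G α) (N : Subgroup G) : Subalgebra ℂ A.carrier :=
  Algebra.adjoin ℂ ((fun g : G => (A.u g : A.carrier)) '' (N : Set G))

/-- The dimension over `ℂ` of a `ℂ^αN`-module. -/
noncomputable def dimC (A : TwistedGroupAlgebra G α) (N : Subgroup G) (M : Type)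
    [AddCommGroup M] [Module (A.sub N) M] : ℕ :=
  Module.finrank ℂ (RestrictScalars ℂ (A.sub N) M)

/-- `TwistIso A N g M M'` says that `M'` is isomorphic to the twist `{}^{g}M` of the
`ℂ^αN`-module `M`, i.e. there is an additive bijection `e : M' → M` with
`e (a • m') = (u_g⁻¹ a u_g) • e m'` for all `a ∈ ℂ^αN`. -/
def TwistIso (A : TwistedGroupAlgebra G α) (N : Subgroup G) (g : G)
    (M M' : Type) [AddCommGroup M] [Module (A.sub N) M]
    [AddCommGroup M'] [Module (A.sub N) M'] : Prop :=
  ∃ e : M' ≃+ M, ∀ (a : A.sub N) (m' : M')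
    (h : (((A.u g)⁻¹ : A.carrierˣ) : A.carrier) * (a : A.carrier) * (A.u g : A.carrier) ∈
      A.sub N),
    e (a • m') =
      (⟨(((A.u g)⁻¹ : A.carrierˣ) : A.carrier) * (a : A.carrier) * (A.u g : A.carrier), h⟩ :
        A.sub N) • e m'

/-- The action of `G/N` on isomorphism classes of simple `ℂ^αN`-modules is transitive. -/
def TransAction (A : TwistedGroupAlgebra G α) (N : Subgroup G) : Prop :=
  ∀ (M : Type) [AddCommGroup M] [Module (A.sub N) M]
    (M' : Type) [AddCommGroup M'] [Module (A.sub N) M'],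
    IsSimpleModule (A.sub N) M → IsSimpleModule (A.sub N) M' →
    ∃ g : G, TwistIso A N g M M'

/-- The action of `G/N` on isomorphism classes of simple `ℂ^αN`-modules is free. -/
def FreeAction (A : TwistedGroupAlgebra G α) (N : Subgroup G) : Prop :=
  ∀ (M : Type) [AddCommGroup M] [Module (A.sub N) M], IsSimpleModule (A.sub N) M →
    ∀ g : G, TwistIso A N g M M → g ∈ N

/-- The restriction of the cohomology class of `α` to the subgroup `N` is trivial. -/
def RestTrivial (α : G → G → ℂˣ) (N : Subgroup G) : Prop :=
  ∃ β : N → ℂˣ, ∀ n n' : N, α n n' = β n * β n' * (β (n * n'))⁻¹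

end TwistedGroupAlgebra

/-- The group `C_n × C_n`. -/
abbrev CnCn (n : ℕ) : Type := Multiplicative (ZMod n) × Multiplicative (ZMod n)

namespace Stmt15Aux

noncomputable section

variable {G : Type} [CommGroup G]

def cf (α : G → G → ℂˣ) (a : G) : ℕ → ℂˣ
  | 0 => 1
  | i + 1 => cf α a i * α (a ^ i) a

def df (α : G → G → ℂˣ) (a b : G) (i : ℕ) : ℕ → ℂˣ
  | 0 => 1
  | j + 1 => df α a b i j * α (a ^ i * b ^ j) b

def Cf (α : G → G → ℂˣ) (a b : G) (i j : ℕ) : ℂˣ := cf α a i * df α a b i j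

variable {α : G → G → ℂˣ} (hα : IsTwoCocycle α)

include hα

theorem aone_right (g : G) : α g 1 = α 1 1 := by
  have h := hα g 1 1
  simp only [mul_one] at h
  exact mul_right_cancel h

theorem aone_left (g : G) : α 1 g = α 1 1 := by
  have h := hα 1 1 g
  simp only [one_mul] at h
  exact (mul_right_cancel h.symm)

theorem one_var (a : G) : ∀ j i : ℕ,
    α (a ^ i) (a ^ j) * cf α a i * cf α a j = α 1 1 * cf α a (i + j) := by
  intro j
  induction j with
  | zero => intro i; simp [cf, aone_right hα]
  | succ j ih =>
    intro i
    have hc := hα (a ^ i) (a ^ j) a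
    rw [← pow_add, ← pow_succ] at hc
    have ihi := ih i
    rw [Units.ext_iff] at *
    simp only [Units.val_mul, cf] at *
    linear_combination (-((cf α a i : ℂ) * (cf α a j : ℂ))) * hc +
      (α (a ^ (i + j)) a : ℂ) * ihi

theorem one_var_symm (a : G) (i j : ℕ) : α (a ^ i) (a ^ j) = α (a ^ j) (a ^ i) := by
  have h1 := one_var hα a j i
  have h2 := one_var hα a i j
  rw [Nat.add_comm j i] at h2
  rw [mul_right_comm] at h2
  exact mul_right_cancel (mul_right_cancel (h1.trans h2.symm))

/-- `α a (a^s b^t) * C s t = C (s+1) t`. -/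
theorem lq (a b : G) : ∀ t s : ℕ,
    α a (a ^ s * b ^ t) * Cf α a b s t = Cf α a b (s + 1) t := by
  intro t
  induction t with
  | zero =>
    intro s
    have h := one_var hα a s 1
    simp only [pow_one, add_comm 1 s] at h
    have hc1 : cf α a 1 = α 1 1 := by simp [cf, aone_left hα]
    rw [hc1] at h
    simp only [Cf, df, pow_zero, mul_one]
    rw [Units.ext_iff] at *
    simp only [Units.val_mul] at *
    apply mul_left_cancel₀ (Units.ne_zero (α 1 1))
    linear_combination h
  | succ t ih =>
    intro s
    have hc := hα a (a ^ s * b ^ t) b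
    have e1 : a * (a ^ s * b ^ t) = a ^ (s + 1) * b ^ t := by
      rw [← mul_assoc, ← pow_succ']
    have e2 : a ^ s * b ^ t * b = a ^ s * b ^ (t + 1) := by
      rw [mul_assoc, ← pow_succ]
    rw [e1, e2] at hc
    have ihs := ih s
    rw [Units.ext_iff] at *
    simp only [Units.val_mul, Cf, df, cf] at *
    linear_combination (-((cf α a s : ℂ) * (df α a b s t : ℂ))) * hc +
      (α (a ^ (s + 1) * b ^ t) b : ℂ) * ihs

/-- main expansion -/
theorem lp (a b : G)
    (hsym : ∀ s t : ℕ, α (a ^ s * b ^ t) a = α a (a ^ s * b ^ t)) :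
    ∀ j' i' i j : ℕ,
      α (a ^ i * b ^ j) (a ^ i' * b ^ j') * Cf α a b i j * Cf α a b i' j' =
        α 1 1 * Cf α a b (i + i') (j + j') := by
  have base : ∀ i' i j : ℕ,
      α (a ^ i * b ^ j) (a ^ i') * Cf α a b i j * cf α a i' =
        α 1 1 * Cf α a b (i + i') j := by
    intro i'
    induction i' with
    | zero => intro i j; simp [cf, aone_right hα]
    | succ i' ih =>
      intro i j
      have hc := hα (a ^ i * b ^ j) (a ^ i') a
      have e1 : a ^ i * b ^ j * a ^ i' = a ^ (i + i') * b ^ j := by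
        rw [mul_right_comm, ← pow_add]
      have e2 : a ^ i' * a = a ^ (i' + 1) := by rw [← pow_succ]
      rw [e1, e2] at hc
      have hs := hsym (i + i') j
      have hq := lq hα a b j (i + i')
      have ihi := ih i j
      have e3 : i + (i' + 1) = (i + i') + 1 := by omega
      rw [e3]
      rw [Units.ext_iff] at *
      simp only [Units.val_mul, Cf, df, cf] at *
      linear_combination
        (-((cf α a i : ℂ) * (df α a b i j : ℂ) * (cf α a i' : ℂ))) * hc
        + ((α 1 1 : ℂ) * (cf α a (i + i') : ℂ) * (df α a b (i + i') j : ℂ)) * hs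
        + ((α 1 1 : ℂ)) * hq
        + ((α (a ^ (i + i') * b ^ j) a : ℂ)) * ihi
  intro j'
  induction j' with
  | zero =>
    intro i' i j
    have h := base i' i j
    simpa [Cf, df] using h
  | succ j' ih =>
    intro i' i j
    have hc := hα (a ^ i * b ^ j) (a ^ i' * b ^ j') b
    have e1 : a ^ i * b ^ j * (a ^ i' * b ^ j') = a ^ (i + i') * b ^ (j + j') := by
      rw [mul_mul_mul_comm, ← pow_add, ← pow_add]
    have e2 : a ^ i' * b ^ j' * b = a ^ i' * b ^ (j' + 1) := by
      rw [mul_assoc, ← pow_succ]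
    rw [e1, e2] at hc
    have ihi := ih i' i j
    have e3 : j + (j' + 1) = (j + j') + 1 := by omega
    rw [e3]
    rw [Units.ext_iff] at *
    simp only [Units.val_mul, Cf, df, cf] at *
    linear_combination
      (-((cf α a i : ℂ) * (df α a b i j : ℂ) * (cf α a i' : ℂ) * (df α a b i' j' : ℂ))) * hc
      + ((α (a ^ (i+i') * b ^ (j+j')) b : ℂ)) * ihi

omit hα in
theorem exists_root (z : ℂˣ) (k : ℕ) (hk : k ≠ 0) : ∃ w : ℂˣ, w ^ k = z := by
  have hz : (z : ℂ) ≠ 0 := Units.ne_zero z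
  have h2 := Complex.cpow_nat_inv_pow (z : ℂ) hk
  refine ⟨Units.mk0 ((z : ℂ) ^ ((k : ℂ))⁻¹) ?_, ?_⟩
  · intro h
    rw [h, zero_pow hk] at h2
    exact hz h2.symm
  · rw [Units.ext_iff]
    simp only [Units.val_pow_eq_pow_val, Units.val_mk0]
    exact h2

omit hα in
theorem per_iter {p : ℕ} (F : ℕ → ℕ → ℂˣ) (hF : ∀ i j, F (i + p) j = F i j) :
    ∀ (s i j : ℕ), F (i + p * s) j = F i j := by
  intro s
  induction s with
  | zero => simp
  | succ s ih =>
    intro i j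
    have : i + p * (s + 1) = (i + p * s) + p := by ring
    rw [this, hF, ih]

omit hα in
theorem per_iter' {q : ℕ} (F : ℕ → ℕ → ℂˣ) (hF : ∀ i j, F i (j + q) = F i j) :
    ∀ (s i j : ℕ), F i (j + q * s) = F i j := by
  intro s
  induction s with
  | zero => simp
  | succ s ih =>
    intro i j
    have : j + q * (s + 1) = (j + q * s) + q := by ring
    rw [this, hF, ih]

/-- Main trivialization lemma. -/
theorem two_gen (a b : G) (p q : ℕ) (hp : p ≠ 0) (hq : q ≠ 0)
    (ha : a ^ p = 1) (hb : b ^ q = 1)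
    (hsym : ∀ s t : ℕ, α (a ^ s * b ^ t) a = α a (a ^ s * b ^ t)) :
    ∃ F : ℕ → ℕ → ℂˣ,
      (∀ i j i' j' : ℕ, α (a ^ i * b ^ j) (a ^ i' * b ^ j') =
        F i j * F i' j' * (F (i + i') (j + j'))⁻¹) ∧
      (∀ i j, F (i + p) j = F i j) ∧ (∀ i j, F i (j + q) = F i j) := by
  obtain ⟨wa, hwa⟩ := exists_root (cf α a p) p hp
  obtain ⟨wb, hwb⟩ := exists_root (df α a b 0 q) q hq
  set F : ℕ → ℕ → ℂˣ := fun i j => α 1 1 * (Cf α a b i j)⁻¹ * wa ^ i * wb ^ j with hF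
  have hKa : ∀ i j, Cf α a b (i + p) j = Cf α a b i j * cf α a p := by
    intro i j
    have h := lp hα a b hsym 0 p i j
    rw [ha, pow_zero, mul_one, Nat.add_zero, aone_right hα] at h
    have hp0 : Cf α a b p 0 = cf α a p := by simp [Cf, df]
    rw [hp0, mul_assoc] at h
    exact (mul_left_cancel h).symm
  have hKb : ∀ i j, Cf α a b i (j + q) = Cf α a b i j * df α a b 0 q := by
    intro i j
    have h := lp hα a b hsym q 0 i j
    rw [hb, pow_zero, one_mul, Nat.add_zero, aone_right hα] at h
    have hq0 : Cf α a b 0 q = df α a b 0 q := by simp [Cf, cf]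
    rw [hq0, mul_assoc] at h
    exact (mul_left_cancel h).symm
  refine ⟨F, ?_, ?_, ?_⟩
  · intro i j i' j'
    have h := lp hα a b hsym j' i' i j
    rw [Units.ext_iff] at h ⊢
    simp only [hF, Units.val_mul, Units.val_inv_eq_inv_val, Units.val_pow_eq_pow_val,
      pow_add] at h ⊢
    have n1 : (Cf α a b i j : ℂ) ≠ 0 := Units.ne_zero _
    have n2 : (Cf α a b i' j' : ℂ) ≠ 0 := Units.ne_zero _
    have n3 : (Cf α a b (i + i') (j + j') : ℂ) ≠ 0 := Units.ne_zero _
    have n4 : (wa : ℂ) ≠ 0 := Units.ne_zero _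
    have n5 : (wb : ℂ) ≠ 0 := Units.ne_zero _
    have n6 : (α 1 1 : ℂ) ≠ 0 := Units.ne_zero _
    field_simp
    linear_combination h
  · intro i j
    rw [Units.ext_iff]
    simp only [hF, hKa i j, pow_add, ← hwa, Units.val_mul, Units.val_inv_eq_inv_val,
      Units.val_pow_eq_pow_val]
    have n4 : (wa : ℂ) ≠ 0 := Units.ne_zero _
    have n1 : (Cf α a b i j : ℂ) ≠ 0 := Units.ne_zero _
    field_simp
  · intro i j
    rw [Units.ext_iff]
    simp only [hF, hKb i j, pow_add, ← hwb, Units.val_mul, Units.val_inv_eq_inv_val,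
      Units.val_pow_eq_pow_val]
    have n5 : (wb : ℂ) ≠ 0 := Units.ne_zero _
    have n1 : (Cf α a b i j : ℂ) ≠ 0 := Units.ne_zero _
    field_simp

/-- the antisymmetric pairing attached to `α` -/
def Pa (α : G → G → ℂˣ) (g h : G) : ℂˣ := α g h * (α h g)⁻¹

theorem pa_mul_left (g h k : G) : Pa α (g * h) k = Pa α g k * Pa α h k := by
  have h1 := hα g h k
  have h2 := hα k g h
  have h3 := hα g k h
  rw [mul_comm k g] at h2
  rw [mul_comm h k] at h1
  rw [Units.ext_iff] at *
  simp only [Pa, Units.val_mul, Units.val_inv_eq_inv_val] at *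
  have nu : (α g h : ℂ) ≠ 0 := Units.ne_zero _
  have key : (α (g * h) k : ℂ) * α k g * α k h * α g h =
      (α k (g * h) : ℂ) * α g k * α h k * α g h := by
    linear_combination ((α k g : ℂ) * (α k h : ℂ)) * h1 + ((α g k : ℂ) * (α h k : ℂ)) * h2
      - ((α h k : ℂ) * (α k g : ℂ)) * h3
  have key' := mul_right_cancel₀ nu key
  have nb : (α k (g * h) : ℂ) ≠ 0 := Units.ne_zero _
  have n1 : (α k g : ℂ) ≠ 0 := Units.ne_zero _
  have n2 : (α k h : ℂ) ≠ 0 := Units.ne_zero _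
  field_simp
  linear_combination key'

omit hα in
theorem pa_swap (g h : G) : Pa α g h = (Pa α h g)⁻¹ := by
  simp only [Pa, mul_inv_rev, inv_inv, mul_comm]

theorem pa_one_left (g : G) : Pa α 1 g = 1 := by
  simp only [Pa, aone_left hα, aone_right hα, mul_inv_cancel]

theorem pa_pow_left (g h : G) : ∀ s : ℕ, Pa α (g ^ s) h = Pa α g h ^ s := by
  intro s
  induction s with
  | zero => simpa using pa_one_left hα h
  | succ s ih => rw [pow_succ, pa_mul_left hα, ih, pow_succ]

theorem pa_pow_right (g h : G) (s : ℕ) : Pa α g (h ^ s) = Pa α g h ^ s := by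
  rw [pa_swap, pa_pow_left hα, ← inv_pow, ← pa_swap]

omit hα in
theorem pa_eq_one (g h : G) (hp : Pa α g h = 1) : α g h = α h g := by
  simpa [Pa, mul_inv_eq_one] using hp

theorem pa_one_right (g : G) : Pa α g 1 = 1 := by
  rw [pa_swap, pa_one_left hα, inv_one]

theorem pa_pow_pow (g h : G) (u v : ℕ) : Pa α (g ^ u) (h ^ v) = Pa α g h ^ (u * v) := by
  rw [pa_pow_left hα, pa_pow_right hα, ← pow_mul, Nat.mul_comm]

theorem pa_gen (g h : G) (hgh : Pa α h g = 1) (s t : ℕ) :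
    α (g ^ s * h ^ t) g = α g (g ^ s * h ^ t) := by
  apply pa_eq_one
  rw [pa_mul_left hα, pa_pow_left hα, pa_pow_left hα, hgh, one_pow, mul_one]
  have hgg : Pa α g g = 1 := by simp [Pa]
  rw [hgg, one_pow]

omit hα in
theorem reduceF {p q : ℕ} (F : ℕ → ℕ → ℂˣ) (hp : ∀ i j, F (i + p) j = F i j)
    (hq : ∀ i j, F i (j + q) = F i j) (i j : ℕ) : F i j = F (i % p) (j % q) := by
  conv_lhs => rw [show i = i % p + p * (i / p) from (Nat.mod_add_div _ _).symm,
    show j = j % q + q * (j / q) from (Nat.mod_add_div _ _).symm]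
  rw [per_iter F hp, per_iter' F hq]

end

section Assembly

theorem exp_self (k : ℕ) (x : Multiplicative (ZMod k)) : x ^ k = 1 := by
  have h1 : x = Multiplicative.ofAdd x.toAdd := rfl
  rw [h1, ← ofAdd_nsmul]
  have h2 : k • x.toAdd = 0 := by rw [nsmul_eq_mul, ZMod.natCast_self, zero_mul]
  rw [h2]
  rfl

theorem ga_pow (n : ℕ) (k : ℕ) :
    ((Multiplicative.ofAdd (1 : ZMod n), 1) : CnCn n) ^ k
      = (Multiplicative.ofAdd ((k : ZMod n)), 1) := by
  refine Prod.ext ?_ ?_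
  · rw [Prod.pow_fst, ← ofAdd_nsmul]
    congr 1
    rw [nsmul_eq_mul, mul_one]
  · rw [Prod.pow_snd, one_pow]

theorem gb_pow (n : ℕ) (k : ℕ) :
    ((1, Multiplicative.ofAdd (1 : ZMod n)) : CnCn n) ^ k
      = (1, Multiplicative.ofAdd ((k : ZMod n))) := by
  refine Prod.ext ?_ ?_
  · rw [Prod.pow_fst, one_pow]
  · rw [Prod.pow_snd, ← ofAdd_nsmul]
    congr 1
    rw [nsmul_eq_mul, mul_one]

/-- the projection cutting out `L₂` -/
def pi2 {l lm n : ℕ} (h1 : l ∣ n) (h2 : lm ∣ n) :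
    CnCn n →* Multiplicative (ZMod l) × Multiplicative (ZMod lm) :=
  ((AddMonoidHom.toMultiplicative (ZMod.castHom h1 (ZMod l)).toAddMonoidHom).comp
      (MonoidHom.snd _ _)).prod
    ((AddMonoidHom.toMultiplicative (ZMod.castHom h2 (ZMod lm)).toAddMonoidHom).comp
      (MonoidHom.fst _ _))

theorem pi2_surjective {l lm n : ℕ} (h1 : l ∣ n) (h2 : lm ∣ n) :
    Function.Surjective (pi2 (n := n) h1 h2) := by
  rintro ⟨u, v⟩
  obtain ⟨su, hsu⟩ := ZMod.ringHom_surjective (ZMod.castHom h1 (ZMod l)) u.toAdd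
  obtain ⟨sv, hsv⟩ := ZMod.ringHom_surjective (ZMod.castHom h2 (ZMod lm)) v.toAdd
  refine ⟨(Multiplicative.ofAdd sv, Multiplicative.ofAdd su), ?_⟩
  refine Prod.ext ?_ ?_ <;>
    simp [pi2, hsu, hsv]

theorem mem_pi2_ker {l lm n : ℕ} [NeZero n] [NeZero l] [NeZero lm]
    (h1 : l ∣ n) (h2 : lm ∣ n)
    (x : CnCn n) (hx : x ∈ (pi2 (n := n) h1 h2).ker) :
    lm ∣ x.1.toAdd.val ∧ l ∣ x.2.toAdd.val := by
  rw [MonoidHom.mem_ker] at hx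
  have h1' := congrArg Prod.fst hx
  have h2' := congrArg Prod.snd hx
  simp only [pi2, MonoidHom.prod_apply, MonoidHom.comp_apply, MonoidHom.coe_snd,
    MonoidHom.coe_fst, Prod.fst_one, Prod.snd_one] at h1' h2'
  constructor
  · have : ZMod.castHom h2 (ZMod lm) x.1.toAdd = 0 := h2'
    rw [ZMod.castHom_apply, ← ZMod.natCast_val, ZMod.natCast_eq_zero_iff] at this
    exact this
  · have : ZMod.castHom h1 (ZMod l) x.2.toAdd = 0 := h1'
    rw [ZMod.castHom_apply, ← ZMod.natCast_val, ZMod.natCast_eq_zero_iff] at this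
    exact this

end Assembly

end Stmt15Aux


open TwistedGroupAlgebra in
/-- Let `n = l²·m` with `l ≥ 2`, `m ≥ 1`, let `A = C_n × C_n`, and
let `α` be a 2-cocycle on `A` with `ℂ^αA` a simple ring.  Then there are Lagrangians
`L₁, L₂ ≤ A` with respect to the class of `α` (each of order `n` and with trivial
restricted class) such that `A/L₁` is cyclic of order `n`, while
`A/L₂ ≅ C_l × C_{l·m}` is not cyclic; in particular `A/L₁ ≇ A/L₂`. -/
theorem stmt15 (l m n : ℕ) (hl : 2 ≤ l) (hm : 1 ≤ m) (hn : n = l ^ 2 * m)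
    (α : CnCn n → CnCn n → ℂˣ) (hα : IsTwoCocycle α)
    (A : TwistedGroupAlgebra (CnCn n) α) (hA : IsSimpleRing A.carrier) :
    ∃ L₁ L₂ : Subgroup (CnCn n),
      ((∃ β : L₁ → ℂˣ, ∀ x y : L₁, α x y = β x * β y * (β (x * y))⁻¹) ∧
        Nat.card L₁ = n) ∧
      ((∃ β : L₂ → ℂˣ, ∀ x y : L₂, α x y = β x * β y * (β (x * y))⁻¹) ∧
        Nat.card L₂ = n) ∧
      IsCyclic (CnCn n ⧸ L₁) ∧ Nat.card (CnCn n ⧸ L₁) = n ∧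
      Nonempty ((CnCn n ⧸ L₂) ≃* (Multiplicative (ZMod l) × Multiplicative (ZMod (l * m)))) ∧
      ¬ IsCyclic (CnCn n ⧸ L₂) ∧
      IsEmpty ((CnCn n ⧸ L₁) ≃* (CnCn n ⧸ L₂)) := by
  classical
  clear hA
  have hl0 : 0 < l := by omega
  have hm0 : 0 < m := by omega
  have hn0 : 0 < n := by rw [hn]; exact Nat.mul_pos (pow_pos hl0 2) hm0
  haveI : NeZero n := ⟨hn0.ne'⟩
  haveI : NeZero l := ⟨hl0.ne'⟩
  haveI : NeZero (l * m) := ⟨(Nat.mul_pos hl0 hm0).ne'⟩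
  have hdvd1 : l ∣ n := ⟨l * m, by rw [hn]; ring⟩
  have hdvd2 : l * m ∣ n := ⟨l, by rw [hn]; ring⟩
  have hnlm : n = (l * m) * l := by rw [hn]; ring
  -- the two subgroups
  set π₁ : CnCn n →* Multiplicative (ZMod n) :=
    MonoidHom.snd (Multiplicative (ZMod n)) (Multiplicative (ZMod n)) with hπ₁def
  set π₂ := Stmt15Aux.pi2 (n := n) hdvd1 hdvd2 with hπ₂def
  set L1 : Subgroup (CnCn n) := π₁.ker with hL1def
  set L2 : Subgroup (CnCn n) := π₂.ker with hL2def
  have hπ₁s : Function.Surjective π₁ := fun y => ⟨(1, y), rfl⟩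
  have hπ₂s : Function.Surjective π₂ := Stmt15Aux.pi2_surjective hdvd1 hdvd2
  have e1 : (CnCn n ⧸ L1) ≃* Multiplicative (ZMod n) :=
    QuotientGroup.quotientKerEquivOfSurjective π₁ hπ₁s
  have e2 : (CnCn n ⧸ L2) ≃*
      (Multiplicative (ZMod l) × Multiplicative (ZMod (l * m))) :=
    QuotientGroup.quotientKerEquivOfSurjective π₂ hπ₂s
  -- cardinalities
  have cmult : ∀ k : ℕ, Nat.card (Multiplicative (ZMod k)) = k := fun k => by
    rw [Nat.card_congr Multiplicative.toAdd, Nat.card_zmod]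
  have cardA : Nat.card (CnCn n) = n * n := by
    rw [Nat.card_prod, cmult]
  have cardQ1 : Nat.card (CnCn n ⧸ L1) = n := by
    rw [Nat.card_congr e1.toEquiv, cmult]
  have cardT : Nat.card (Multiplicative (ZMod l) × Multiplicative (ZMod (l * m))) = n := by
    rw [Nat.card_prod, cmult, cmult, hn]; ring
  have cardQ2 : Nat.card (CnCn n ⧸ L2) = n := by
    rw [Nat.card_congr e2.toEquiv, cardT]
  have cardL1 : Nat.card L1 = n := by
    have h := Subgroup.card_eq_card_quotient_mul_card_subgroup L1
    rw [cardA, cardQ1] at h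
    exact (Nat.eq_of_mul_eq_mul_left hn0 h.symm)
  have cardL2 : Nat.card L2 = n := by
    have h := Subgroup.card_eq_card_quotient_mul_card_subgroup L2
    rw [cardA, cardQ2] at h
    exact (Nat.eq_of_mul_eq_mul_left hn0 h.symm)
  -- cyclicity facts
  have cyc1 : IsCyclic (CnCn n ⧸ L1) :=
    isCyclic_of_surjective e1.symm.toMonoidHom e1.symm.surjective
  have noncycT : ¬ IsCyclic (Multiplicative (ZMod l) × Multiplicative (ZMod (l * m))) := by
    intro hc
    obtain ⟨g, hg⟩ := hc.exists_generator
    have ho : orderOf g = n := by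
      rw [orderOf_eq_card_of_forall_mem_zpowers hg, cardT]
    have hgp : g ^ (l * m) = 1 := by
      refine Prod.ext ?_ ?_
      · rw [Prod.pow_fst, pow_mul, Stmt15Aux.exp_self, one_pow]; rfl
      · rw [Prod.pow_snd, Stmt15Aux.exp_self]; rfl
    have hdv := orderOf_dvd_of_pow_eq_one hgp
    rw [ho] at hdv
    have hle := Nat.le_of_dvd (Nat.mul_pos hl0 hm0) hdv
    rw [hn] at hle
    nlinarith
  have noncyc2 : ¬ IsCyclic (CnCn n ⧸ L2) := fun hc =>
    noncycT (isCyclic_of_surjective e2.toMonoidHom e2.surjective)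
  -- restriction of α to L1 is trivial
  have rest1 : ∃ β : L1 → ℂˣ, ∀ x y : L1, α x y = β x * β y * (β (x * y))⁻¹ := by
    set ga : CnCn n := (Multiplicative.ofAdd (1 : ZMod n), 1) with hgadef
    have hga : ga ^ n = 1 := by
      rw [Stmt15Aux.ga_pow, ZMod.natCast_self]; rfl
    have hsym1 : ∀ s t : ℕ, α (ga ^ s * (1 : CnCn n) ^ t) ga = α ga (ga ^ s * (1 : CnCn n) ^ t) := by
      intro s t
      rw [one_pow, mul_one]
      have := Stmt15Aux.one_var_symm hα ga s 1
      rwa [pow_one] at this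
    obtain ⟨F, hFmain, hFp, hFq⟩ :=
      Stmt15Aux.two_gen hα ga 1 n 1 hn0.ne' one_ne_zero hga (one_pow 1) hsym1
    have rep : ∀ x : L1, (x : CnCn n) = ga ^ ((x : CnCn n).1.toAdd.val) * (1 : CnCn n) ^ 0 := by
      intro x
      have hx2 : ((x : CnCn n)).2 = 1 := x.2
      rw [pow_zero, mul_one, Stmt15Aux.ga_pow, ZMod.natCast_val, ZMod.cast_id]
      exact Prod.ext rfl hx2
    refine ⟨fun x => F ((x : CnCn n).1.toAdd.val) 0, ?_⟩
    intro x y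
    have hmain := hFmain ((x : CnCn n).1.toAdd.val) 0 ((y : CnCn n).1.toAdd.val) 0
    rw [← rep x, ← rep y] at hmain
    have hvadd : ((x * y : L1) : CnCn n).1.toAdd.val
        = ((x : CnCn n).1.toAdd.val + (y : CnCn n).1.toAdd.val) % n := by
      rw [Subgroup.coe_mul]
      exact ZMod.val_add _ _
    have hlast : F ((x : CnCn n).1.toAdd.val + (y : CnCn n).1.toAdd.val) (0 + 0)
        = F (((x * y : L1) : CnCn n).1.toAdd.val) 0 := by
      calc F ((x : CnCn n).1.toAdd.val + (y : CnCn n).1.toAdd.val) (0 + 0)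
          = F (((x : CnCn n).1.toAdd.val + (y : CnCn n).1.toAdd.val) % n) ((0 + 0) % 1) :=
            Stmt15Aux.reduceF F hFp hFq _ _
        _ = F (((x * y : L1) : CnCn n).1.toAdd.val) 0 := by rw [hvadd]
    rw [hmain, hlast]
  -- restriction of α to L2 is trivial
  have rest2 : ∃ β : L2 → ℂˣ, ∀ x y : L2, α x y = β x * β y * (β (x * y))⁻¹ := by
    set ga : CnCn n := (Multiplicative.ofAdd (1 : ZMod n), 1) with hgadef
    set gb : CnCn n := (1, Multiplicative.ofAdd (1 : ZMod n)) with hgbdef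
    set a2 : CnCn n := ga ^ (l * m) with ha2def
    set b2 : CnCn n := gb ^ l with hb2def
    have hga : ga ^ n = 1 := by rw [Stmt15Aux.ga_pow, ZMod.natCast_self]; rfl
    have hgb : gb ^ n = 1 := by rw [Stmt15Aux.gb_pow, ZMod.natCast_self]; rfl
    have ha2 : a2 ^ l = 1 := by rw [ha2def, ← pow_mul, ← hnlm, hga]
    have hb2 : b2 ^ (l * m) = 1 := by
      rw [hb2def, ← pow_mul, show l * (l * m) = n by rw [hn]; ring, hgb]
    have h2 : Stmt15Aux.Pa α b2 a2 = 1 := by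
      rw [hb2def, ha2def, Stmt15Aux.pa_pow_pow hα, show l * (l * m) = n by rw [hn]; ring,
        ← Stmt15Aux.pa_pow_right hα, hga, Stmt15Aux.pa_one_right hα]
    have hsym2 : ∀ s t : ℕ, α (a2 ^ s * b2 ^ t) a2 = α a2 (a2 ^ s * b2 ^ t) :=
      fun s t => Stmt15Aux.pa_gen hα a2 b2 h2 s t
    obtain ⟨F, hFmain, hFp, hFq⟩ :=
      Stmt15Aux.two_gen hα a2 b2 l (l * m) hl0.ne' (Nat.mul_pos hl0 hm0).ne' ha2 hb2 hsym2
    have hdivs : ∀ x : L2, (l * m) ∣ ((x : CnCn n)).1.toAdd.val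
        ∧ l ∣ ((x : CnCn n)).2.toAdd.val := fun x =>
      Stmt15Aux.mem_pi2_ker hdvd1 hdvd2 _ x.2
    have ha2pow : ∀ k : ℕ, a2 ^ k
        = ((Multiplicative.ofAdd (((l * m) * k : ℕ) : ZMod n), 1) : CnCn n) := by
      intro k
      rw [ha2def, ← pow_mul, Stmt15Aux.ga_pow]
    have hb2pow : ∀ k : ℕ, b2 ^ k
        = ((1, Multiplicative.ofAdd ((l * k : ℕ) : ZMod n)) : CnCn n) := by
      intro k
      rw [hb2def, ← pow_mul, Stmt15Aux.gb_pow]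
    have rep : ∀ x : L2, (x : CnCn n)
        = a2 ^ (((x : CnCn n)).1.toAdd.val / (l * m)) * b2 ^ (((x : CnCn n)).2.toAdd.val / l) := by
      intro x
      obtain ⟨d1, d2⟩ := hdivs x
      rw [ha2pow, hb2pow]
      refine Prod.ext ?_ ?_
      · show (x : CnCn n).1 = _ * 1
        rw [mul_one, Nat.mul_div_cancel' d1, ZMod.natCast_val, ZMod.cast_id]
        rfl
      · show (x : CnCn n).2 = 1 * _
        rw [one_mul, Nat.mul_div_cancel' d2, ZMod.natCast_val, ZMod.cast_id]
        rfl
    refine ⟨fun x => F (((x : CnCn n)).1.toAdd.val / (l * m))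
      (((x : CnCn n)).2.toAdd.val / l), ?_⟩
    intro x y
    have hmain := hFmain (((x : CnCn n)).1.toAdd.val / (l * m))
      (((x : CnCn n)).2.toAdd.val / l)
      (((y : CnCn n)).1.toAdd.val / (l * m)) (((y : CnCn n)).2.toAdd.val / l)
    rw [← rep x, ← rep y] at hmain
    have key1 : ∀ vx vy : ℕ, (l * m) ∣ vx → (l * m) ∣ vy →
        ((vx + vy) % n) / (l * m) = (vx / (l * m) + vy / (l * m)) % l := by
      rintro _ _ ⟨ix, rfl⟩ ⟨iy, rfl⟩
      rw [Nat.mul_div_cancel_left _ (Nat.mul_pos hl0 hm0),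
        Nat.mul_div_cancel_left _ (Nat.mul_pos hl0 hm0), ← Nat.mul_add, hnlm,
        Nat.mul_mod_mul_left, Nat.mul_div_cancel_left _ (Nat.mul_pos hl0 hm0)]
    have key2 : ∀ vx vy : ℕ, l ∣ vx → l ∣ vy →
        ((vx + vy) % n) / l = (vx / l + vy / l) % (l * m) := by
      rintro _ _ ⟨ix, rfl⟩ ⟨iy, rfl⟩
      rw [Nat.mul_div_cancel_left _ hl0, Nat.mul_div_cancel_left _ hl0, ← Nat.mul_add,
        show n = l * (l * m) by rw [hn]; ring,
        Nat.mul_mod_mul_left, Nat.mul_div_cancel_left _ hl0]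
    obtain ⟨d1x, d2x⟩ := hdivs x
    obtain ⟨d1y, d2y⟩ := hdivs y
    have hfst : ((x * y : L2) : CnCn n).1.toAdd.val / (l * m)
        = (((x : CnCn n)).1.toAdd.val / (l * m) + ((y : CnCn n)).1.toAdd.val / (l * m)) % l := by
      have hv : ((x * y : L2) : CnCn n).1.toAdd.val
          = (((x : CnCn n)).1.toAdd.val + ((y : CnCn n)).1.toAdd.val) % n := by
        rw [Subgroup.coe_mul]
        exact ZMod.val_add _ _
      rw [hv]
      exact key1 _ _ d1x d1y
    have hsnd : ((x * y : L2) : CnCn n).2.toAdd.val / l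
        = (((x : CnCn n)).2.toAdd.val / l + ((y : CnCn n)).2.toAdd.val / l) % (l * m) := by
      have hv : ((x * y : L2) : CnCn n).2.toAdd.val
          = (((x : CnCn n)).2.toAdd.val + ((y : CnCn n)).2.toAdd.val) % n := by
        rw [Subgroup.coe_mul]
        exact ZMod.val_add _ _
      rw [hv]
      exact key2 _ _ d2x d2y
    have hlast : F (((x : CnCn n)).1.toAdd.val / (l * m) + ((y : CnCn n)).1.toAdd.val / (l * m))
          (((x : CnCn n)).2.toAdd.val / l + ((y : CnCn n)).2.toAdd.val / l)
        = F (((x * y : L2) : CnCn n).1.toAdd.val / (l * m))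
          (((x * y : L2) : CnCn n).2.toAdd.val / l) := by
      rw [hfst, hsnd]
      exact Stmt15Aux.reduceF F hFp hFq _ _
    rw [hmain, hlast]
  exact ⟨L1, L2, ⟨rest1, cardL1⟩, ⟨rest2, cardL2⟩, cyc1, cardQ1, ⟨e2⟩, noncyc2,
    ⟨fun f => noncyc2 (isCyclic_of_surjective f.toMonoidHom f.surjective)⟩⟩
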